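/- Let ᾱ ∈ (0, π] and β̄ ∈ [−π/2, π/2], set λ̄ = −ᾱ/2 if ᾱ ∈ [π/4, 3π/4] and λ̄ = π/4 − ᾱ/2 otherwise, and let α and β be the unique real polynomials of degree ≤ 3 satisfying α(0) = λ̄, α(1) = λ̄ + ᾱ, α'(0) = α'(1) = ᾱ·cos β̄, β(0) = β(1) = β̄, β'(0) = −ᾱ·sin β̄/(sin λ̄·cos λ̄), β'(1) = −ᾱ·sin β̄/(sin(λ̄+ᾱ)·cos(λ̄+ᾱ)). Define the real functions ω2 = α'·cos β − β'·sin α·cos α·sin β and ω3 = α'·sin β + β'·sin α·cos α·cos β. Then ω2(s)² + ω3(s)² > 0 for every s ∈ [0, 1]; i.e., ω2 and ω3 never vanish simultaneously on [0, 1]. -/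

import Mathlib

open Set

private lemma sin_ne_of_mem (x : ℝ) (h1 : 0 < x) (h2 : x < Real.pi) : Real.sin x ≠ 0 :=
  (Real.sin_pos_of_pos_of_lt_pi h1 h2).ne'

private lemma sin_ne_of_neg (x : ℝ) (h1 : -Real.pi < x) (h2 : x < 0) : Real.sin x ≠ 0 := by
  have := sin_ne_of_mem (-x) (by linarith) (by linarith)
  simpa [Real.sin_neg, neg_eq_zero] using this

private lemma sin_ne_of_big (x : ℝ) (h1 : Real.pi < x) (h2 : x < 2 * Real.pi) :
    Real.sin x ≠ 0 := by
  have := sin_ne_of_mem (x - Real.pi) (by linarith) (by linarith)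
  rw [Real.sin_sub_pi] at this
  simpa [neg_eq_zero] using this

private lemma sincos_ne (x : ℝ) (h : Real.sin (2 * x) ≠ 0) :
    Real.sin x * Real.cos x ≠ 0 := by
  intro hc
  apply h
  rw [Real.sin_two_mul, mul_assoc, hc, mul_zero]

private lemma deriv_cubic (a b c d s : ℝ) :
    deriv (fun s => a * s ^ 3 + b * s ^ 2 + c * s + d) s = 3 * a * s ^ 2 + 2 * b * s + c := by
  have h : HasDerivAt (fun s : ℝ => a * s ^ 3 + b * s ^ 2 + c * s + d)
      (3 * a * s ^ 2 + 2 * b * s + c) s := by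
    have := (((hasDerivAt_pow 3 s).const_mul a).add (((hasDerivAt_pow 2 s).const_mul b).add
      (((hasDerivAt_id s).const_mul c).add (hasDerivAt_const s d))))
    exact (this.congr_deriv (by push_cast; ring)).congr_of_eventuallyEq
      (Filter.Eventually.of_forall fun x => by simp [id]; ring)
  exact h.deriv

theorem stmt_13
    (αb βb lamb : ℝ)
    (hαb : αb ∈ Ioc (0:ℝ) Real.pi)
    (hβb : βb ∈ Icc (-(Real.pi/2)) (Real.pi/2))
    (hlamb : lamb = if αb ∈ Icc (Real.pi/4) (3 * Real.pi/4) then -αb/2 else Real.pi/4 - αb/2)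
    (α β : ℝ → ℝ)
    (hαpoly : ∃ a b c d : ℝ, ∀ s, α s = a * s ^ 3 + b * s ^ 2 + c * s + d)
    (hβpoly : ∃ a b c d : ℝ, ∀ s, β s = a * s ^ 3 + b * s ^ 2 + c * s + d)
    (hα0 : α 0 = lamb) (hα1 : α 1 = lamb + αb)
    (hα'0 : deriv α 0 = αb * Real.cos βb) (hα'1 : deriv α 1 = αb * Real.cos βb)
    (hβ0 : β 0 = βb) (hβ1 : β 1 = βb)
    (hβ'0 : deriv β 0 = -(αb * Real.sin βb) / (Real.sin lamb * Real.cos lamb))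
    (hβ'1 : deriv β 1 = -(αb * Real.sin βb) / (Real.sin (lamb + αb) * Real.cos (lamb + αb)))
    (ω2 ω3 : ℝ → ℝ)
    (hω2 : ∀ s, ω2 s = deriv α s * Real.cos (β s) -
      deriv β s * Real.sin (α s) * Real.cos (α s) * Real.sin (β s))
    (hω3 : ∀ s, ω3 s = deriv α s * Real.sin (β s) +
      deriv β s * Real.sin (α s) * Real.cos (α s) * Real.cos (β s)) :
    ∀ s ∈ Icc (0:ℝ) 1, 0 < ω2 s ^ 2 + ω3 s ^ 2 := by
  obtain ⟨hαb0, hαbπ⟩ := hαb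
  obtain ⟨hβbl, hβbr⟩ := hβb
  have hπ : (3:ℝ) < Real.pi := Real.pi_gt_three
  -- key nonvanishing facts
  have hS0 : Real.sin lamb * Real.cos lamb ≠ 0 := by
    apply sincos_ne
    by_cases h : αb ∈ Icc (Real.pi/4) (3 * Real.pi/4)
    · rw [if_pos h] at hlamb
      obtain ⟨h1, h2⟩ := h
      apply sin_ne_of_neg <;> [skip; skip] <;> rw [hlamb] <;> linarith
    · rw [if_neg h] at hlamb
      rw [mem_Icc, not_and_or, not_le, not_le] at h
      rcases h with h | h
      · apply sin_ne_of_mem <;> rw [hlamb] <;> linarith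
      · apply sin_ne_of_neg <;> rw [hlamb] <;> linarith
  have hS1 : Real.sin (lamb + αb) * Real.cos (lamb + αb) ≠ 0 := by
    apply sincos_ne
    by_cases h : αb ∈ Icc (Real.pi/4) (3 * Real.pi/4)
    · rw [if_pos h] at hlamb
      obtain ⟨h1, h2⟩ := h
      apply sin_ne_of_mem <;> rw [hlamb] <;> linarith
    · rw [if_neg h] at hlamb
      rw [mem_Icc, not_and_or, not_le, not_le] at h
      rcases h with h | h
      · apply sin_ne_of_mem <;> rw [hlamb] <;> linarith
      · apply sin_ne_of_big <;> rw [hlamb] <;> linarith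
  -- explicit derivative of α
  obtain ⟨a, b, c, d, hf⟩ := hαpoly
  have hαfun : α = fun s => a * s ^ 3 + b * s ^ 2 + c * s + d := funext hf
  have hda : ∀ s, deriv α s = 3 * a * s ^ 2 + 2 * b * s + c := by
    intro s; rw [hαfun]; exact deriv_cubic a b c d s
  set K := αb * Real.cos βb with hK
  have hKnn : 0 ≤ K := mul_nonneg hαb0.le (Real.cos_nonneg_of_mem_Icc ⟨hβbl, hβbr⟩)
  have hKle : K ≤ αb := by
    have := Real.cos_le_one βb
    nlinarith
  have hc : c = K := by have := hda 0; rw [hα'0] at this; linarith [this]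
  have h321 : 3 * a + 2 * b + c = K := by
    have := hda 1; rw [hα'1] at this; linarith [this]
  have habc : a + b + c = αb := by
    have e0 := hf 0; have e1 := hf 1
    rw [hα0] at e0; rw [hα1] at e1
    simp at e0 e1; linarith
  have ha : a = 2 * (K - αb) := by linarith
  have hb : b = 3 * (αb - K) := by linarith
  have hform : ∀ s, deriv α s = K + 6 * (αb - K) * s * (1 - s) := by
    intro s; rw [hda s, ha, hb, hc]; ring
  intro s hs
  obtain ⟨hs0, hs1⟩ := hs
  -- reduce to A² + B²
  have hsum : ω2 s ^ 2 + ω3 s ^ 2 =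
      (deriv α s) ^ 2 + (deriv β s * Real.sin (α s) * Real.cos (α s)) ^ 2 := by
    rw [hω2 s, hω3 s]
    linear_combination ((deriv α s) ^ 2 +
      (deriv β s * Real.sin (α s) * Real.cos (α s)) ^ 2) * Real.sin_sq_add_cos_sq (β s)
  rw [hsum]
  by_cases hKpos : 0 < K
  · have hA : 0 < deriv α s := by
      rw [hform s]
      have h6 := mul_nonneg (mul_nonneg (mul_nonneg (by norm_num : (0:ℝ) ≤ 6)
        (sub_nonneg.mpr hKle)) hs0) (sub_nonneg.mpr hs1)
      linarith
    exact add_pos_of_pos_of_nonneg (pow_pos hA 2) (sq_nonneg _)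
  · have hK0 : K = 0 := le_antisymm (not_lt.mp hKpos) hKnn
    have hcos0 : Real.cos βb = 0 := by
      rcases mul_eq_zero.mp (hK ▸ hK0.symm).symm with h | h
      · exact absurd h hαb0.ne'
      · exact h
    have hsin2 : Real.sin βb ^ 2 = 1 := by
      have := Real.sin_sq_add_cos_sq βb
      rw [hcos0] at this; nlinarith
    rcases eq_or_lt_of_le hs0 with h0 | h0
    · -- s = 0
      have hB : deriv β 0 * Real.sin (α 0) * Real.cos (α 0) = -(αb * Real.sin βb) := by
        rw [hβ'0, hα0]
        field_simp [(mul_ne_zero_iff.mp hS0).1, (mul_ne_zero_iff.mp hS0).2]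
      have hB2 : (-(αb * Real.sin βb)) ^ 2 = αb ^ 2 := by
        have : (-(αb * Real.sin βb)) ^ 2 = αb ^ 2 * Real.sin βb ^ 2 := by ring
        rw [this, hsin2, mul_one]
      rw [← h0, hB]
      exact add_pos_of_nonneg_of_pos (sq_nonneg _) (by rw [hB2]; positivity)
    rcases eq_or_lt_of_le hs1 with h1 | h1
    · -- s = 1
      have hB : deriv β 1 * Real.sin (α 1) * Real.cos (α 1) = -(αb * Real.sin βb) := by
        rw [hβ'1, hα1]
        field_simp [(mul_ne_zero_iff.mp hS1).1, (mul_ne_zero_iff.mp hS1).2]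
      have hB2 : (-(αb * Real.sin βb)) ^ 2 = αb ^ 2 := by
        have : (-(αb * Real.sin βb)) ^ 2 = αb ^ 2 * Real.sin βb ^ 2 := by ring
        rw [this, hsin2, mul_one]
      rw [h1, hB]
      exact add_pos_of_nonneg_of_pos (sq_nonneg _) (by rw [hB2]; positivity)
    · -- 0 < s < 1
      have hA : 0 < deriv α s := by
        rw [hform s, hK0]
        have h6 : 0 < 6 * (αb - 0) * s * (1 - s) := by
          apply mul_pos (mul_pos (by linarith) h0)
          linarith
        linarith
      exact add_pos_of_pos_of_nonneg (pow_pos hA 2) (sq_nonneg _)
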